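/- Let U ⊆ [0,1]^m be nonempty, compact, convex, down-monotone (i.e., ξ ∈ U and 0 ≤ ξ' ≤ ξ imply ξ' ∈ U), and invariant under all coordinate permutations, and let μ ≥ 0. Define γ(j) = (1/j)·max_{ξ∈U} Σ_{i=1}^j ξ_i for j ∈ {1,…,m}. Then max_{ξ∈U} Σ_{i=1}^m (ξ_i − μ)_+ = max_{j∈{1,…,m}} j·(γ(j) − μ)_+; in particular, for some j ∈ {1,…,m}, the vector ξ* = γ(j)·Σ_{i=1}^j e_i lies in U and attains the maximum of Σ_{i=1}^m (ξ_i − μ)_+ over U. -/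

import Mathlib

/-- `γ j` is the maximal average value of the first `j` components of any `ξ ∈ U`. -/
noncomputable def gammaU {m : ℕ} (U : Set (Fin m → ℝ)) (j : ℕ) : ℝ :=
  (1 / (j : ℝ)) *
    sSup ((fun ξ : Fin m → ℝ => ∑ i ∈ Finset.univ.filter (fun i : Fin m => (i : ℕ) < j), ξ i) '' U)

open Fin.NatCast

lemma finRotate_pow_apply' (n k : ℕ) (a : Fin (n+1)) :
    ((finRotate (n+1)) ^ k) a = a + (k : Fin (n+1)) := by
  induction k generalizing a with
  | zero => simp
  | succ k ih =>
      rw [pow_succ, Equiv.Perm.mul_apply, finRotate_succ_apply]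
      rw [ih]
      push_cast
      abel

def eSub {m j : ℕ} (h : j ≤ m) : Fin j ≃ {i : Fin m // (i : ℕ) < j} where
  toFun := fun a => ⟨⟨a.1, a.2.trans_le h⟩, a.2⟩
  invFun := fun x => ⟨x.1.1, x.2⟩
  left_inv := fun _ => rfl
  right_inv := fun _ => rfl

lemma card_filter_lt' {m j : ℕ} (h : j ≤ m) :
    (Finset.univ.filter (fun i : Fin m => (i : ℕ) < j)).card = j := by
  rw [← Fintype.card_subtype, Fintype.card_congr (eSub h).symm, Fintype.card_fin]

lemma bddAbove_sum_filter {m j : ℕ} (U : Set (Fin m → ℝ))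
    (hbox : ∀ ξ ∈ U, ∀ i, 0 ≤ ξ i ∧ ξ i ≤ 1) :
    BddAbove ((fun ξ : Fin m → ℝ =>
      ∑ i ∈ Finset.univ.filter (fun i : Fin m => (i : ℕ) < j), ξ i) '' U) := by
  refine ⟨(m : ℝ), ?_⟩
  rintro y ⟨ξ, hξ, rfl⟩
  calc ∑ i ∈ Finset.univ.filter (fun i : Fin m => (i : ℕ) < j), ξ i
      ≤ ∑ i ∈ Finset.univ.filter (fun i : Fin m => (i : ℕ) < j), (1 : ℝ) :=
        Finset.sum_le_sum fun i _ => (hbox ξ hξ i).2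
    _ = ((Finset.univ.filter (fun i : Fin m => (i : ℕ) < j)).card : ℝ) := by simp
    _ ≤ (m : ℝ) := by
        have := Finset.card_filter_le Finset.univ (fun i : Fin m => (i : ℕ) < j)
        simp only [Finset.card_univ, Fintype.card_fin] at this
        exact_mod_cast this

/-- The candidate vector lies in `U`. -/
lemma stmt3_mem {m : ℕ} (U : Set (Fin m → ℝ)) (hne : U.Nonempty)
    (hcomp : IsCompact U) (hconv : Convex ℝ U)
    (hbox : ∀ ξ ∈ U, ∀ i, 0 ≤ ξ i ∧ ξ i ≤ 1)
    (hdown : ∀ ξ ∈ U, ∀ ξ' : Fin m → ℝ, (∀ i, 0 ≤ ξ' i) → (∀ i, ξ' i ≤ ξ i) → ξ' ∈ U)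
    (hperm : ∀ π : Equiv.Perm (Fin m), ∀ ξ ∈ U, (fun i => ξ (π i)) ∈ U)
    {j : ℕ} (hj1 : 1 ≤ j) (hjm : j ≤ m) :
    (fun i : Fin m => if (i : ℕ) < j then gammaU U j else 0) ∈ U := by
  classical
  set g : (Fin m → ℝ) → ℝ :=
    fun ξ => ∑ i ∈ Finset.univ.filter (fun i : Fin m => (i : ℕ) < j), ξ i with hg_def
  have hg : Continuous g := continuous_finset_sum _ fun i _ => continuous_apply i
  obtain ⟨ζ, hζU, hsup, -⟩ := hcomp.exists_sSup_image_eq_and_ge hne hg.continuousOn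
  set ζ' : Fin m → ℝ := fun i => if (i : ℕ) < j then ζ i else 0 with hζ'def
  have hζ'U : ζ' ∈ U := by
    refine hdown ζ hζU ζ' (fun i => ?_) (fun i => ?_)
    · by_cases h : (i : ℕ) < j <;> simp [ζ', h, (hbox ζ hζU i).1]
    · by_cases h : (i : ℕ) < j <;> simp [ζ', h, (hbox ζ hζU i).1]
  have hgζ' : g ζ' = g ζ := by
    refine Finset.sum_congr rfl fun i hi => ?_
    rw [Finset.mem_filter] at hi
    simp [ζ', hi.2]
  have hsupval : g ζ' = (j : ℝ) * gammaU U j := by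
    have hj0 : (j : ℝ) ≠ 0 := by positivity
    rw [gammaU, ← mul_assoc, mul_one_div, div_self hj0, one_mul, hgζ', hsup]
  obtain ⟨n, rfl⟩ : ∃ n, j = n + 1 := ⟨j - 1, (Nat.succ_pred_eq_of_pos hj1).symm⟩
  set e := eSub hjm with he_def
  set π : ℕ → Equiv.Perm (Fin m) :=
    fun k => Equiv.Perm.extendDomain ((finRotate (n+1)) ^ k) e with hπ_def
  have key : ∑ k ∈ Finset.range (n+1), ((n+1 : ℝ))⁻¹ • (fun i => ζ' (π k i))
      = (fun i : Fin m => if (i : ℕ) < n+1 then gammaU U (n+1) else 0) := by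
    funext i
    rw [Finset.sum_apply]
    by_cases hi : (i : ℕ) < n + 1
    · have hterm : ∀ k : ℕ, ζ' (π k i)
          = ζ' ((e ((⟨(i : ℕ), hi⟩ : Fin (n+1)) + (k : Fin (n+1)))).1) := by
        intro k
        have h1 : π k i = (e (((finRotate (n+1)) ^ k) (e.symm ⟨i, hi⟩))).1 :=
          Equiv.Perm.extendDomain_apply_subtype _ e hi
        have h2 : e.symm ⟨i, hi⟩ = (⟨(i : ℕ), hi⟩ : Fin (n+1)) := rfl
        rw [h1, h2, finRotate_pow_apply']
      simp only [Pi.smul_apply, smul_eq_mul]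
      rw [← Finset.mul_sum]
      have hsum1 : ∑ k ∈ Finset.range (n+1), ζ' (π k i)
          = ∑ b : Fin (n+1), ζ' ((e b).1) := by
        simp only [hterm]
        rw [← Fin.sum_univ_eq_sum_range
          (fun k : ℕ => ζ' ((e ((⟨(i : ℕ), hi⟩ : Fin (n+1)) + (k : Fin (n+1)))).1)) (n+1)]
        refine Fintype.sum_equiv (Equiv.addLeft (⟨(i : ℕ), hi⟩ : Fin (n+1))) _ _ fun k => ?_
        simp [Fin.cast_val_eq_self]
      have hsum2 : ∑ b : Fin (n+1), ζ' ((e b).1) = g ζ' := by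
        rw [hg_def]
        refine Finset.sum_bij (fun b _ => (e b).1) ?_ ?_ ?_ ?_
        · intro b _; exact Finset.mem_filter.2 ⟨Finset.mem_univ _, (e b).2⟩
        · intro b₁ _ b₂ _ hb
          exact e.injective (Subtype.ext hb)
        · intro i' hi'
          rw [Finset.mem_filter] at hi'
          exact ⟨⟨(i' : ℕ), hi'.2⟩, Finset.mem_univ _, rfl⟩
        · intro b _; rfl
      rw [hsum1, hsum2, hsupval, if_pos hi]
      push_cast
      rw [← mul_assoc, inv_mul_cancel₀ (by positivity), one_mul]
    · have hterm : ∀ k : ℕ, ζ' (π k i) = 0 := by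
        intro k
        rw [Equiv.Perm.extendDomain_apply_not_subtype _ e hi]
        simp only [ζ', if_neg hi]
      rw [if_neg hi]; simp [hterm]
  rw [← key]
  refine hconv.sum_mem (fun k _ => by positivity) ?_ fun k _ => hperm (π k) ζ' hζ'U
  rw [Finset.sum_const, Finset.card_range, nsmul_eq_mul]
  push_cast
  exact mul_inv_cancel₀ (by positivity)

/-- Value of the objective at the candidate vector. -/
lemma stmt3_val {m : ℕ} (U : Set (Fin m → ℝ)) (μ : ℝ) (hμ : 0 ≤ μ)
    {j : ℕ} (hjm : j ≤ m) :
    ∑ i : Fin m, max ((if (i : ℕ) < j then gammaU U j else 0) - μ) 0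
      = (j : ℝ) * max (gammaU U j - μ) 0 := by
  classical
  rw [← Finset.sum_filter_add_sum_filter_not Finset.univ (fun i : Fin m => (i : ℕ) < j)]
  have h1 : ∑ i ∈ Finset.univ.filter (fun i : Fin m => (i : ℕ) < j),
      max ((if (i : ℕ) < j then gammaU U j else 0) - μ) 0
      = (j : ℝ) * max (gammaU U j - μ) 0 := by
    have hc : ∀ i ∈ Finset.univ.filter (fun i : Fin m => (i : ℕ) < j),
        max ((if (i : ℕ) < j then gammaU U j else 0) - μ) 0 = max (gammaU U j - μ) 0 :=
      fun i hi => by rw [Finset.mem_filter] at hi; rw [if_pos hi.2]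
    rw [Finset.sum_congr rfl hc, Finset.sum_const, card_filter_lt' hjm, nsmul_eq_mul]
  have h2 : ∑ i ∈ Finset.univ.filter (fun i : Fin m => ¬ (i : ℕ) < j),
      max ((if (i : ℕ) < j then gammaU U j else 0) - μ) 0 = 0 := by
    refine Finset.sum_eq_zero fun i hi => ?_
    rw [Finset.mem_filter] at hi
    rw [if_neg hi.2, zero_sub, max_eq_right (by linarith)]
  rw [h1, h2, add_zero]

/-- Upper bound for each `ξ ∈ U`. -/
lemma stmt3_ub {m : ℕ} (hm : 1 ≤ m) (U : Set (Fin m → ℝ))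
    (hbox : ∀ ξ ∈ U, ∀ i, 0 ≤ ξ i ∧ ξ i ≤ 1)
    (hperm : ∀ π : Equiv.Perm (Fin m), ∀ ξ ∈ U, (fun i => ξ (π i)) ∈ U)
    (μ : ℝ) (hμ : 0 ≤ μ) (ξ : Fin m → ℝ) (hξ : ξ ∈ U) :
    ∃ j ∈ Set.Icc 1 m, (∑ i, max (ξ i - μ) 0) ≤ (j : ℝ) * max (gammaU U j - μ) 0 := by
  classical
  set S := Finset.univ.filter (fun i : Fin m => μ < ξ i) with hS_def
  have hsum : ∑ i, max (ξ i - μ) 0 = ∑ i ∈ S, (ξ i - μ) := by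
    rw [← Finset.sum_filter_add_sum_filter_not Finset.univ (fun i : Fin m => μ < ξ i)]
    have hz : ∑ i ∈ Finset.univ.filter (fun i : Fin m => ¬ μ < ξ i),
        max (ξ i - μ) 0 = 0 := by
      refine Finset.sum_eq_zero fun i hi => ?_
      rw [Finset.mem_filter] at hi
      rw [max_eq_right (by push_neg at hi; linarith [hi.2])]
    rw [hz, add_zero]
    refine Finset.sum_congr rfl fun i hi => ?_
    rw [Finset.mem_filter] at hi
    rw [max_eq_left (by linarith [hi.2])]
  by_cases hS : S.card = 0
  · rw [Finset.card_eq_zero] at hS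
    refine ⟨1, ⟨le_refl 1, hm⟩, ?_⟩
    rw [hsum, hS, Finset.sum_empty]
    positivity
  · set j := S.card with hj_def
    have hj1 : 1 ≤ j := Nat.one_le_iff_ne_zero.2 hS
    have hjm : j ≤ m := by
      have := Finset.card_filter_le Finset.univ (fun i : Fin m => μ < ξ i)
      simpa using this
    have hcards : Fintype.card {i : Fin m // (i : ℕ) < j}
        = Fintype.card {i : Fin m // μ < ξ i} := by
      rw [Fintype.card_subtype, Fintype.card_subtype, card_filter_lt' hjm]
    let e2 : {i : Fin m // (i : ℕ) < j} ≃ {i : Fin m // μ < ξ i} :=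
      Fintype.equivOfCardEq hcards
    set π := e2.extendSubtype with hπ_def
    have himg : (Finset.univ.filter (fun i : Fin m => (i : ℕ) < j)).image π = S := by
      refine Finset.eq_of_subset_of_card_le ?_ ?_
      · intro i' hi'
        rw [Finset.mem_image] at hi'
        obtain ⟨i, hi, rfl⟩ := hi'
        rw [Finset.mem_filter] at hi
        exact Finset.mem_filter.2 ⟨Finset.mem_univ _, e2.extendSubtype_mem i hi.2⟩
      · rw [Finset.card_image_of_injective _ π.injective, card_filter_lt' hjm]
    have h1 : ∑ i ∈ Finset.univ.filter (fun i : Fin m => (i : ℕ) < j), ξ (π i)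
        = ∑ i ∈ S, ξ i := by
      rw [← himg, Finset.sum_image (fun a _ b _ h => π.injective h)]
    have hbdd := bddAbove_sum_filter (j := j) U hbox
    have hle : ∑ i ∈ Finset.univ.filter (fun i : Fin m => (i : ℕ) < j), ξ (π i)
        ≤ sSup ((fun ξ : Fin m → ℝ =>
          ∑ i ∈ Finset.univ.filter (fun i : Fin m => (i : ℕ) < j), ξ i) '' U) :=
      le_csSup hbdd ⟨fun i => ξ (π i), hperm π ξ hξ, rfl⟩
    have hsup_eq : sSup ((fun ξ : Fin m → ℝ =>
        ∑ i ∈ Finset.univ.filter (fun i : Fin m => (i : ℕ) < j), ξ i) '' U)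
        = (j : ℝ) * gammaU U j := by
      have hj0 : (j : ℝ) ≠ 0 := by exact_mod_cast hS
      rw [gammaU, ← mul_assoc, mul_one_div, div_self hj0, one_mul]
    refine ⟨j, ⟨hj1, hjm⟩, ?_⟩
    have hcount : ∑ i ∈ S, (ξ i - μ) = (∑ i ∈ S, ξ i) - (j : ℝ) * μ := by
      rw [Finset.sum_sub_distrib, Finset.sum_const, nsmul_eq_mul, hj_def]
    calc ∑ i, max (ξ i - μ) 0 = (∑ i ∈ S, ξ i) - (j : ℝ) * μ := by rw [hsum, hcount]
      _ ≤ (j : ℝ) * gammaU U j - (j : ℝ) * μ := by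
          rw [← h1]
          have := hle.trans_eq hsup_eq
          linarith
      _ = (j : ℝ) * (gammaU U j - μ) := by ring
      _ ≤ (j : ℝ) * max (gammaU U j - μ) 0 := by
          have : (0:ℝ) ≤ (j : ℝ) := by positivity
          exact mul_le_mul_of_nonneg_left (le_max_left _ _) this

theorem stmt3 {m : ℕ} (hm : 1 ≤ m) (U : Set (Fin m → ℝ)) (hne : U.Nonempty)
    (hcomp : IsCompact U) (hconv : Convex ℝ U)
    (hbox : ∀ ξ ∈ U, ∀ i, 0 ≤ ξ i ∧ ξ i ≤ 1)
    (hdown : ∀ ξ ∈ U, ∀ ξ' : Fin m → ℝ, (∀ i, 0 ≤ ξ' i) → (∀ i, ξ' i ≤ ξ i) → ξ' ∈ U)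
    (hperm : ∀ π : Equiv.Perm (Fin m), ∀ ξ ∈ U, (fun i => ξ (π i)) ∈ U)
    (μ : ℝ) (hμ : 0 ≤ μ) :
    sSup ((fun ξ : Fin m → ℝ => ∑ i, max (ξ i - μ) 0) '' U) =
      sSup ((fun j : ℕ => (j : ℝ) * max (gammaU U j - μ) 0) '' Set.Icc 1 m) ∧
    ∃ j ∈ Set.Icc 1 m,
      (fun i : Fin m => if (i : ℕ) < j then gammaU U j else 0) ∈ U ∧
      ∀ ξ ∈ U, (∑ i, max (ξ i - μ) 0) ≤
        ∑ i : Fin m, max ((if (i : ℕ) < j then gammaU U j else 0) - μ) 0 := by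
  classical
  have hbddL : BddAbove ((fun ξ : Fin m → ℝ => ∑ i, max (ξ i - μ) 0) '' U) := by
    refine ⟨(m : ℝ), ?_⟩
    rintro y ⟨ξ, hξ, rfl⟩
    calc ∑ i, max (ξ i - μ) 0 ≤ ∑ i : Fin m, (1 : ℝ) := by
          refine Finset.sum_le_sum fun i _ => ?_
          have h := hbox ξ hξ i
          exact max_le (by linarith [h.2]) zero_le_one
      _ = (m : ℝ) := by simp
  have hbddR : BddAbove ((fun j : ℕ => (j : ℝ) * max (gammaU U j - μ) 0) '' Set.Icc 1 m) :=
    ((Set.finite_Icc 1 m).image _).bddAbove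
  -- existence of maximizing j over Finset.Icc 1 m
  obtain ⟨js, hjs_mem, hjs_max⟩ := Finset.exists_max_image (Finset.Icc 1 m)
    (fun j : ℕ => (j : ℝ) * max (gammaU U j - μ) 0) ⟨1, Finset.mem_Icc.2 ⟨le_refl 1, hm⟩⟩
  rw [Finset.mem_Icc] at hjs_mem
  have hvmem : ∀ j, 1 ≤ j → j ≤ m →
      (fun i : Fin m => if (i : ℕ) < j then gammaU U j else 0) ∈ U :=
    fun j h1 h2 => stmt3_mem U hne hcomp hconv hbox hdown hperm h1 h2
  constructor
  · apply le_antisymm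
    · refine csSup_le (hne.image _) ?_
      rintro y ⟨ξ, hξ, rfl⟩
      obtain ⟨j, hj, hjle⟩ := stmt3_ub hm U hbox hperm μ hμ ξ hξ
      exact hjle.trans (le_csSup hbddR ⟨j, hj, rfl⟩)
    · refine csSup_le ((Set.nonempty_Icc.2 hm).image _) ?_
      rintro y ⟨j, hj, rfl⟩
      rw [Set.mem_Icc] at hj
      have := hvmem j hj.1 hj.2
      have hval := stmt3_val U μ hμ hj.2
      calc (j : ℝ) * max (gammaU U j - μ) 0
          = ∑ i : Fin m, max ((if (i : ℕ) < j then gammaU U j else 0) - μ) 0 := hval.symm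
        _ ≤ sSup ((fun ξ : Fin m → ℝ => ∑ i, max (ξ i - μ) 0) '' U) :=
            le_csSup hbddL ⟨_, this, rfl⟩
  · refine ⟨js, Set.mem_Icc.2 hjs_mem, hvmem js hjs_mem.1 hjs_mem.2, ?_⟩
    intro ξ hξ
    obtain ⟨j, hj, hjle⟩ := stmt3_ub hm U hbox hperm μ hμ ξ hξ
    rw [Set.mem_Icc] at hj
    rw [stmt3_val U μ hμ hjs_mem.2]
    exact hjle.trans (hjs_max j (Finset.mem_Icc.2 hj))
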